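/- Fix real numbers α, η, β with 1 < α < η < β, real numbers N > 0, A > 0, B, and c < 0. If t > 0 satisfies φ_c′(t) = 0 and φ_c″(t) > 0, then t^η < (−αβη c)/((β−η)(η−α)N). -/

import Mathlib

open Real Filter

/-- The fibering map `φ_c(t) = ((t^η/η)N − (t^β/β)B − c)/((t^α/α)A)` on `(0,∞)`. -/
noncomputable def fib (α η β N A B c : ℝ) : ℝ → ℝ :=
  fun t => ((t ^ η / η) * N - (t ^ β / β) * B - c) / ((t ^ α / α) * A)

lemma alg_key (α η β N A B c t P Q R : ℝ) (h1 : 1 < α) (h2 : α < η) (h3 : η < β)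
    (hN : 0 < N) (hA : 0 < A) (hc : c < 0) (ht : 0 < t)
    (hP : 0 < P) (hQ : 0 < Q) (hR : 0 < R)
    (hF : (η * (P/t) / η * N - β * (Q/t) / β * B) * (R / α * A)
      - (P / η * N - Q / β * B - c) * (α * (R/t) / α * A) = 0)
    (hF' : 0 < (η * ((η-1) * (P/t/t)) / η * N - β * ((β-1) * (Q/t/t)) / β * B)
           * (R / α * A)
         + (η * (P/t) / η * N - β * (Q/t) / β * B) * (α * (R/t) / α * A)
         - ((η * (P/t) / η * N - β * (Q/t) / β * B) * (α * (R/t) / α * A)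
            + (P / η * N - Q / β * B - c)
              * (α * ((α-1) * (R/t/t)) / α * A))) :
    P < -(α * β * η * c) / ((β - η) * (η - α) * N) := by
  have hα : (0:ℝ) < α := lt_trans one_pos h1
  have hη : (0:ℝ) < η := lt_trans hα h2
  have hβ : (0:ℝ) < β := lt_trans hη h3
  -- factor hF
  have hfac : (η * (P/t) / η * N - β * (Q/t) / β * B) * (R / α * A)
      - (P / η * N - Q / β * B - c) * (α * (R/t) / α * A)
      = (R * A / (t * α * η * β)) *
        (η * β * (P*N - Q*B) - α * (β * (P*N) - η * (Q*B) - η * β * c)) := by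
    field_simp
  have e1p : η * β * (P*N - Q*B) - α * (β * (P*N) - η * (Q*B) - η * β * c) = 0 := by
    rw [hfac] at hF
    rcases mul_eq_zero.mp hF with h | h
    · exact absurd h (by positivity)
    · exact h
  -- factor hF'
  have hfacE : (η * ((η-1) * (P/t/t)) / η * N - β * ((β-1) * (Q/t/t)) / β * B)
           * (R / α * A)
         + (η * (P/t) / η * N - β * (Q/t) / β * B) * (α * (R/t) / α * A)
         - ((η * (P/t) / η * N - β * (Q/t) / β * B) * (α * (R/t) / α * A)
            + (P / η * N - Q / β * B - c)
              * (α * ((α-1) * (R/t/t)) / α * A))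
      = (R * A / (t * t * α * η * β)) *
        (η * β * ((η-1) * (P*N) - (β-1) * (Q*B))
          - α * (α-1) * (β * (P*N) - η * (Q*B) - η * β * c)) := by
    field_simp
    ring
  rw [hfacE] at hF'
  have hK : (0:ℝ) < R * A / (t * t * α * η * β) := by positivity
  have hM2 : 0 < η * β * ((η-1) * (P*N) - (β-1) * (Q*B))
          - α * (α-1) * (β * (P*N) - η * (Q*B) - η * β * c) := by
    by_contra h
    push_neg at h
    exact absurd hF' (not_lt.mpr (mul_nonpos_iff.mpr (Or.inl ⟨hK.le, h⟩)))
  have hWeq : η * β * ((η-1) * (P*N) - (β-1) * (Q*B))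
          - α * (α-1) * (β * (P*N) - η * (Q*B) - η * β * c)
      = η * β * ((η - α) * (P*N) - (β - α) * (Q*B)) := by
    linear_combination (α - 1) * e1p
  rw [hWeq] at hM2
  have e2 : 0 < (η - α) * (P*N) - (β - α) * (Q*B) := by
    by_contra h
    push_neg at h
    exact absurd hM2 (not_lt.mpr (mul_nonpos_iff.mpr (Or.inl ⟨(mul_pos hη hβ).le, h⟩)))
  have hdpos : (0:ℝ) < (β - η) * (η - α) * N := by
    have : (0:ℝ) < β - η := by linarith
    have : (0:ℝ) < η - α := by linarith
    positivity
  rw [lt_div_iff₀ hdpos]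
  have hgoal_eq : -(α * β * η * c) - P * ((β - η) * (η - α) * N)
      = η * ((η - α) * (P*N) - (β - α) * (Q*B)) := by
    linear_combination (-1) * e1p
  have := mul_pos hη e2
  linarith


noncomputable def D1 (α η β N A B c : ℝ) : ℝ → ℝ := fun s =>
  ((η * s ^ (η-1) / η * N - β * s ^ (β-1) / β * B) * (s ^ α / α * A)
    - (s ^ η / η * N - s ^ β / β * B - c) * (α * s ^ (α-1) / α * A))
    / ((s ^ α / α * A) ^ 2)

lemma fib_hasDeriv (α η β N A B c : ℝ) (hα : 0 < α)
    (hA : 0 < A) {t : ℝ} (ht : 0 < t) :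
    HasDerivAt (fib α η β N A B c) (D1 α η β N A B c t) t := by
  have hRα : (0:ℝ) < t ^ α := Real.rpow_pos_of_pos ht α
  have hden : t ^ α / α * A ≠ 0 := by positivity
  have hnum : HasDerivAt (fun s : ℝ => s ^ η / η * N - s ^ β / β * B - c)
      (η * t ^ (η-1) / η * N - β * t ^ (β-1) / β * B) t :=
    ((((Real.hasDerivAt_rpow_const (p := η) (Or.inl ht.ne')).div_const η).mul_const N).sub
      (((Real.hasDerivAt_rpow_const (p := β) (Or.inl ht.ne')).div_const β).mul_const B)).sub_const c
  have hdenD : HasDerivAt (fun s : ℝ => s ^ α / α * A) (α * t ^ (α-1) / α * A) t :=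
    ((Real.hasDerivAt_rpow_const (p := α) (Or.inl ht.ne')).div_const α).mul_const A
  exact hnum.div hdenD hden

lemma D1_hasDeriv (α η β N A B c : ℝ) (hα : 0 < α) (hA : 0 < A) {t : ℝ} (ht : 0 < t) :
    HasDerivAt (D1 α η β N A B c)
      ((((η * ((η-1) * t ^ (η-1-1)) / η * N - β * ((β-1) * t ^ (β-1-1)) / β * B)
           * (t ^ α / α * A)
         + (η * t ^ (η-1) / η * N - β * t ^ (β-1) / β * B) * (α * t ^ (α-1) / α * A)
         - ((η * t ^ (η-1) / η * N - β * t ^ (β-1) / β * B) * (α * t ^ (α-1) / α * A)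
            + (t ^ η / η * N - t ^ β / β * B - c)
              * (α * ((α-1) * t ^ (α-1-1)) / α * A)))
        * (t ^ α / α * A) ^ 2
        - ((η * t ^ (η-1) / η * N - β * t ^ (β-1) / β * B) * (t ^ α / α * A)
            - (t ^ η / η * N - t ^ β / β * B - c) * (α * t ^ (α-1) / α * A))
          * (2 * (t ^ α / α * A) ^ 1 * (α * t ^ (α-1) / α * A)))
       / ((t ^ α / α * A) ^ 2) ^ 2) t := by
  have hRα : (0:ℝ) < t ^ α := Real.rpow_pos_of_pos ht α
  have hden : t ^ α / α * A ≠ 0 := by positivity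
  have hden2 : (t ^ α / α * A) ^ 2 ≠ 0 := pow_ne_zero 2 hden
  have ha : HasDerivAt (fun s : ℝ => η * s ^ (η-1) / η * N - β * s ^ (β-1) / β * B)
      (η * ((η-1) * t ^ (η-1-1)) / η * N - β * ((β-1) * t ^ (β-1-1)) / β * B) t :=
    ((((Real.hasDerivAt_rpow_const (p := η-1) (Or.inl ht.ne')).const_mul η).div_const η).mul_const N).sub
      ((((Real.hasDerivAt_rpow_const (p := β-1) (Or.inl ht.ne')).const_mul β).div_const β).mul_const B)
  have hd : HasDerivAt (fun s : ℝ => s ^ α / α * A) (α * t ^ (α-1) / α * A) t :=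
    ((Real.hasDerivAt_rpow_const (p := α) (Or.inl ht.ne')).div_const α).mul_const A
  have hn : HasDerivAt (fun s : ℝ => s ^ η / η * N - s ^ β / β * B - c)
      (η * t ^ (η-1) / η * N - β * t ^ (β-1) / β * B) t :=
    ((((Real.hasDerivAt_rpow_const (p := η) (Or.inl ht.ne')).div_const η).mul_const N).sub
      (((Real.hasDerivAt_rpow_const (p := β) (Or.inl ht.ne')).div_const β).mul_const B)).sub_const c
  have he : HasDerivAt (fun s : ℝ => α * s ^ (α-1) / α * A)
      (α * ((α-1) * t ^ (α-1-1)) / α * A) t :=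
    (((Real.hasDerivAt_rpow_const (p := α-1) (Or.inl ht.ne')).const_mul α).div_const α).mul_const A
  exact ((ha.mul hd).sub (hn.mul he)).div (hd.pow 2) hden2

theorem stmt10 (α η β N A B : ℝ) (h1 : 1 < α) (h2 : α < η) (h3 : η < β)
    (hN : 0 < N) (hA : 0 < A) (c : ℝ) (hc : c < 0)
    (t : ℝ) (ht : 0 < t)
    (hcrit : deriv (fib α η β N A B c) t = 0)
    (hconv : 0 < deriv (deriv (fib α η β N A B c)) t) :
    t ^ η < -(α * β * η * c) / ((β - η) * (η - α) * N) := by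
  have hα : (0:ℝ) < α := lt_trans one_pos h1
  have hη : (0:ℝ) < η := lt_trans hα h2
  have hβ : (0:ℝ) < β := lt_trans hη h3
  have hRα : (0:ℝ) < t ^ α := Real.rpow_pos_of_pos ht α
  have hden : (0:ℝ) < t ^ α / α * A := by positivity
  -- first derivative value
  have hd1 : deriv (fib α η β N A B c) t = D1 α η β N A B c t :=
    (fib_hasDeriv α η β N A B c hα hA ht).deriv
  rw [hd1] at hcrit
  -- numerator of D1 is zero
  have hF : (η * t ^ (η-1) / η * N - β * t ^ (β-1) / β * B) * (t ^ α / α * A)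
      - (t ^ η / η * N - t ^ β / β * B - c) * (α * t ^ (α-1) / α * A) = 0 := by
    have h2' := hcrit
    unfold D1 at h2'
    have := div_eq_zero_iff.mp h2'
    rcases this with h | h
    · exact h
    · exact absurd h (by positivity)
  -- second derivative
  have hev : deriv (fib α η β N A B c) =ᶠ[nhds t] D1 α η β N A B c := by
    filter_upwards [eventually_gt_nhds ht] with s hs
    exact (fib_hasDeriv α η β N A B c hα hA hs).deriv
  have hd2 : deriv (deriv (fib α η β N A B c)) t = deriv (D1 α η β N A B c) t :=
    hev.deriv_eq
  rw [hd2, (D1_hasDeriv α η β N A B c hα hA ht).deriv] at hconv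
  rw [hF] at hconv
  -- extract positivity of F'
  have hG2 : (0:ℝ) < ((t ^ α / α * A) ^ 2) ^ 2 := by positivity
  have hF' : 0 < ((η * ((η-1) * t ^ (η-1-1)) / η * N - β * ((β-1) * t ^ (β-1-1)) / β * B)
           * (t ^ α / α * A)
         + (η * t ^ (η-1) / η * N - β * t ^ (β-1) / β * B) * (α * t ^ (α-1) / α * A)
         - ((η * t ^ (η-1) / η * N - β * t ^ (β-1) / β * B) * (α * t ^ (α-1) / α * A)
            + (t ^ η / η * N - t ^ β / β * B - c)
              * (α * ((α-1) * t ^ (α-1-1)) / α * A))) := by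
    have h0 := (div_pos_iff.mp hconv)
    rcases h0 with ⟨h, _⟩ | ⟨_, h⟩
    · have hsq : (0:ℝ) < (t ^ α / α * A) ^ 2 := by positivity
      nlinarith
    · exact absurd h (not_lt.mpr hG2.le)
  have hrw : ∀ p : ℝ, t ^ (p-1) = t ^ p / t := fun p => by
    rw [Real.rpow_sub ht, Real.rpow_one]
  simp only [hrw] at hF hF'
  exact alg_key α η β N A B c t (t ^ η) (t ^ β) (t ^ α) h1 h2 h3 hN hA hc ht
    (Real.rpow_pos_of_pos ht η) (Real.rpow_pos_of_pos ht β) hRα hF hF'
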